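/- Let U be an ultrafilter on ω and m : ω → ω strictly increasing such that for every partition ω = ⊔_i A_i with A_i ∉ U there exists A ∈ U with: for all i, n ∈ A ∩ A_i implies A ∩ A_i ∩ {j : j ≥ m(n)} = ∅. Define M_0 = m(0), M_{k+1} = m(M_k), and Φ : ω → ω by Φ(j) = n iff M_n ≤ j < M_{n+1} (and Φ(j) = 0 for j < M_0). Then the pushforward ultrafilter Φ(U) is a Ramsey ultrafilter on ω. -/
import Mathlib


/-- M_0 = m 0, M_{k+1} = m (M_k). -/
def Mseq (m : ℕ → ℕ) : ℕ → ℕ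
  | 0 => m 0
  | k + 1 => m (Mseq m k)

/-- Φ(j) = n iff M_n ≤ j < M_{n+1}, and Φ(j) = 0 for j < M_0. -/
noncomputable def Phi (m : ℕ → ℕ) (j : ℕ) : ℕ := sSup {n | Mseq m n ≤ j}

/-- the pushforward Φ(U) of a partially selective ultrafilter is Ramsey. -/
theorem stmt9 (U : Ultrafilter ℕ) (m : ℕ → ℕ) (hm : StrictMono m)
    (hps : ∀ A : ℕ → Set ℕ, Pairwise (Function.onFun Disjoint A) →
      (⋃ i, A i) = Set.univ → (∀ i, A i ∉ U) →
      ∃ S ∈ U, ∀ i, ∀ n ∈ S ∩ A i, S ∩ A i ∩ {j | m n ≤ j} = ∅) :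
    ∀ B : ℕ → Set ℕ, Pairwise (Function.onFun Disjoint B) →
      (⋃ i, B i) = Set.univ → (∀ i, B i ∉ U.map (Phi m)) →
      ∃ S ∈ U.map (Phi m), ∀ i, (S ∩ B i).Subsingleton := by
  intro B hBdisj hBcover hBnot
  by_cases h0 : m 0 = 0
  · -- degenerate case: Φ ≡ 0 and the hypotheses are contradictory
    exfalso
    have hMk : ∀ k, Mseq m k = 0 := by
      intro k; induction k with
      | zero => exact h0
      | succ k ih => simpa [Mseq, ih] using h0
    have hPhi : ∀ j, Phi m j = 0 := by
      intro j
      have hset : {n | Mseq m n ≤ j} = Set.univ := by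
        ext n; simp [hMk]
      have hnb : ¬ BddAbove (Set.univ : Set ℕ) := by
        rintro ⟨x, hx⟩
        have := hx (Set.mem_univ (x + 1))
        omega
      rw [Phi, hset, csSup_of_not_bddAbove hnb, csSup_empty]
      rfl
    have h0mem : (0 : ℕ) ∈ ⋃ i, B i := hBcover.symm ▸ Set.mem_univ 0
    rw [Set.mem_iUnion] at h0mem
    obtain ⟨i, hi⟩ := h0mem
    apply hBnot i
    rw [Ultrafilter.mem_map]
    exact Filter.mem_of_superset Filter.univ_mem (fun j _ => by
      simp only [Set.mem_preimage, hPhi]; exact hi)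
  · -- main case: m 0 > 0, so x < m x for all x and Mseq is strictly increasing
    have hlt : ∀ x, x < m x := by
      intro x
      induction x with
      | zero => omega
      | succ x ih =>
        have h7 : m x < m (x + 1) := hm (by omega)
        omega
    have hMmono : StrictMono (Mseq m) := by
      apply strictMono_nat_of_lt_succ
      intro k
      exact hlt (Mseq m k)
    have hMle : ∀ n, n ≤ Mseq m n := fun n => hMmono.le_apply
    have hbdd : ∀ j, BddAbove {n | Mseq m n ≤ j} :=
      fun j => ⟨j, fun n hn => le_trans (hMle n) hn⟩
    have hle_phi : ∀ {b j : ℕ}, Mseq m b ≤ j → b ≤ Phi m j :=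
      fun {b j} h => le_csSup (hbdd j) h
    have hphi_lt : ∀ j, j < Mseq m (Phi m j + 1) := by
      intro j
      by_contra h
      push_neg at h
      have := hle_phi h
      omega
    have hM_le_of_pos : ∀ j, 0 < Phi m j → Mseq m (Phi m j) ≤ j := by
      intro j hpos
      have hne : {n | Mseq m n ≤ j}.Nonempty := by
        by_contra h
        rw [Set.not_nonempty_iff_eq_empty] at h
        have : Phi m j = 0 := by rw [Phi, h]; exact csSup_empty
        omega
      exact Nat.sSup_mem hne (hbdd j)
    -- apply partial selectivity to the preimage partition
    set A : ℕ → Set ℕ := fun i => Phi m ⁻¹' (B i) with hA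
    have hAdisj : Pairwise (Function.onFun Disjoint A) :=
      fun i j hij => (hBdisj hij).preimage _
    have hAcover : (⋃ i, A i) = Set.univ := by
      rw [hA, ← Set.preimage_iUnion, hBcover, Set.preimage_univ]
    have hAnot : ∀ i, A i ∉ U := by
      intro i hAi
      exact hBnot i (Ultrafilter.mem_map.mpr hAi)
    obtain ⟨S, hSU, hS⟩ := hps A hAdisj hAcover hAnot
    -- key consecutivity lemma
    have hstep : ∀ i n n', n ∈ S → n' ∈ S → Phi m n ∈ B i → Phi m n' ∈ B i →
        Phi m n < Phi m n' → Phi m n' = Phi m n + 1 := by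
      intro i n n' hn hn' hBn hBn' hlt'
      have hnA : n ∈ S ∩ A i := ⟨hn, hBn⟩
      have hn'A : n' ∈ S ∩ A i := ⟨hn', hBn'⟩
      have h1 : n' < m n := by
        by_contra h
        push_neg at h
        have h2 := hS i n hnA
        rw [Set.eq_empty_iff_forall_notMem] at h2
        exact h2 n' ⟨hn'A, h⟩
      have h2 : Mseq m (Phi m n') ≤ n' := hM_le_of_pos n' (by omega)
      have h3 : n < Mseq m (Phi m n + 1) := hphi_lt n
      have h4 : m n < m (Mseq m (Phi m n + 1)) := hm h3
      have h5 : n' < Mseq m (Phi m n + 2) := by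
        have h6 : Mseq m (Phi m n + 2) = m (Mseq m (Phi m n + 1)) := rfl
        omega
      have h6 : Phi m n' < Phi m n + 2 := by
        by_contra h
        push_neg at h
        have := hMmono.monotone h
        omega
      omega
    -- from a large set with no consecutive Φ-values, build the Ramsey witness
    have key : ∀ E : Set ℕ, E ∈ U →
        (∀ j ∈ E, ∀ j' ∈ E, Phi m j' ≠ Phi m j + 1) →
        ∃ S' ∈ U.map (Phi m), ∀ i, (S' ∩ B i).Subsingleton := by
      intro E hEU hEcons
      refine ⟨Phi m '' (S ∩ E), ?_, ?_⟩
      · rw [Ultrafilter.mem_map]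
        exact Filter.mem_of_superset (Filter.inter_mem hSU hEU)
          (Set.subset_preimage_image _ _)
      · intro i a ha b hb
        obtain ⟨⟨n, ⟨hnS, hnE⟩, rfl⟩, haB⟩ := ha
        obtain ⟨⟨n', ⟨hn'S, hn'E⟩, rfl⟩, hbB⟩ := hb
        rcases lt_trichotomy (Phi m n) (Phi m n') with h | h | h
        · exact absurd (hstep i n n' hnS hn'S haB hbB h) (hEcons n hnE n' hn'E)
        · exact h
        · exact absurd (hstep i n' n hn'S hnS hbB haB h) (hEcons n' hn'E n hnE)
    rcases Ultrafilter.mem_or_compl_mem U {j | Even (Phi m j)} with hE | hE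
    · refine key _ hE ?_
      intro j hj j' hj' hc
      rw [Set.mem_setOf_eq, Nat.even_iff] at hj hj'
      omega
    · refine key _ hE ?_
      intro j hj j' hj' hc
      rw [Set.mem_compl_iff, Set.mem_setOf_eq, Nat.even_iff] at hj hj'
      omega
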